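/- There exists a universal constant c > 0 with the following property. Let f : ℝ^N → ℝ^n be continuously differentiable with Jacobian J : ℝ^N → ℝ^{n×N}, let y ∈ ℝ^n satisfy ‖y‖ ≤ √n, and let Φ ∈ ℝ^{n×M} with K := ΦΦ^T. Define the gradient-descent iterations θ(t+1) = θ(t) − (η/n) J(θ(t))^T (f(θ(t)) − y) and ω(t+1) = ω(t) − (η/n) Φ^T (Φ ω(t) − y), and set u(t) := f(θ(t)) and u^lin(t) := Φ ω(t). Assume u(0) = u^lin(0) = 0, η ≤ n/‖K‖, and that there exist ε ∈ (0, ‖K‖) and R > 0 with R² ε < n such that ‖J(θ) J(θ')^T − K‖ ≤ ε whenever ‖θ − θ(0)‖ ≤ R and ‖θ' − θ(0)‖ ≤ R. Then there is a universal constant C > 0 such that for every integer t with 0 ≤ t ≤ c R²/η: ‖u(t) − u^lin(t)‖ ≤ C η t ε/√n, ‖θ(t) − θ(0)‖ ≤ R, and ‖ω(t) − ω(0)‖ ≤ R. -/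

import Mathlib

open MeasureTheory ProbabilityTheory

noncomputable section

namespace EarlyPhase

/-- The squared ℓ₂ norm of a vector. -/
def sqnorm {ι : Type*} [Fintype ι] (x : ι → ℝ) : ℝ := ∑ i, (x i) ^ 2

/-- The ℓ₂ norm of a vector. -/
def vnorm {ι : Type*} [Fintype ι] (x : ι → ℝ) : ℝ := Real.sqrt (∑ i, (x i) ^ 2)

/-- The Euclidean inner product of two vectors. -/
def vdot {ι : Type*} [Fintype ι] (x y : ι → ℝ) : ℝ := ∑ i, x i * y i

/-- The spectral norm (ℓ₂ → ℓ₂ operator norm) of a matrix. -/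
def spNorm {ι κ : Type*} [Fintype ι] [Fintype κ] (A : Matrix ι κ ℝ) : ℝ :=
  sSup {c : ℝ | ∃ x : κ → ℝ, vnorm x ≤ 1 ∧ c = vnorm (A.mulVec x)}

/-- The Frobenius norm of a matrix. -/
def frobNorm {ι κ : Type*} [Fintype ι] [Fintype κ] (A : Matrix ι κ ℝ) : ℝ :=
  Real.sqrt (∑ i, ∑ j, (A i j) ^ 2)

/-- The standard Gaussian measure N(0, I) on `ι → ℝ`. -/
def stdGaussian (ι : Type*) [Fintype ι] : Measure (ι → ℝ) :=
  Measure.pi fun _ => gaussianReal 0 1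

/-- Iterates of a map. -/
def iterSeq {A : Type*} (step : A → A) (a0 : A) : ℕ → A
  | 0 => a0
  | t + 1 => step (iterSeq step a0 t)

/-- Activation assumption: either φ is twice continuously differentiable with `|φ(0)|`,
`|φ'|`, `|φ''|` bounded by `Ca` (and `φd = φ'`), or φ is piecewise linear with slopes `1, a`
(and `φd z = 1` for `z ≥ 0`, `φd z = a` for `z < 0`). -/
def ActAssump (Ca : ℝ) (φ φd : ℝ → ℝ) : Prop :=
  (ContDiff ℝ 2 φ ∧ φd = deriv φ ∧ |φ 0| ≤ Ca ∧ (∀ z, |φd z| ≤ Ca) ∧ ∀ z, |deriv φd z| ≤ Ca)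
  ∨ ∃ a : ℝ, (∀ z, φ z = if 0 ≤ z then z else a * z) ∧ ∀ z, φd z = if 0 ≤ z then 1 else a

/-- ζ = E[φ'(g)] for g ~ N(0,1). -/
def zetaOf (φd : ℝ → ℝ) : ℝ := ∫ z, φd z ∂(gaussianReal 0 1)

/-- ν² = (E[g φ'(g)])² · Tr[Σ²]/d. -/
def nuSqOf {d : ℕ} (φd : ℝ → ℝ) (Sig : Matrix (Fin d) (Fin d) ℝ) : ℝ :=
  (∫ z, z * φd z ∂(gaussianReal 0 1)) ^ 2 * (Sig * Sig).trace / d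

/-- The function e ↦ E[φ((1+e) g)] for g ~ N(0,1). -/
def thFun (φ : ℝ → ℝ) : ℝ → ℝ := fun e => ∫ z, φ ((1 + e) * z) ∂(gaussianReal 0 1)

/-- ϑ₀: the constant coefficient of the second-order Taylor polynomial of `thFun φ` at 0. -/
def th0 (φ : ℝ → ℝ) : ℝ := thFun φ 0

/-- ϑ₁: the linear coefficient of the second-order Taylor polynomial of `thFun φ` at 0. -/
def th1 (φ : ℝ → ℝ) : ℝ := deriv (thFun φ) 0

/-- ϑ₂: the quadratic coefficient of the second-order Taylor polynomial of `thFun φ` at 0. -/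
def th2 (φ : ℝ → ℝ) : ℝ := deriv (deriv (thFun φ)) 0 / 2

/-- q(x) = ϑ₀ + ϑ₁(‖x‖/√d − 1) + ϑ₂(‖x‖/√d − 1)². -/
def qEnt {d : ℕ} (φ : ℝ → ℝ) (x : Fin d → ℝ) : ℝ :=
  th0 φ + th1 φ * (vnorm x / Real.sqrt d - 1) + th2 φ * (vnorm x / Real.sqrt d - 1) ^ 2

/-- Entry marginal assumptions: mean zero, variance one, subgaussian with constant `Ca`. -/
def Marginals (Ca : ℝ) {d : ℕ} (ν : Fin d → Measure ℝ) : Prop :=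
  (∀ j, ∫ z, z ∂(ν j) = 0) ∧ (∀ j, ∫ z, z ^ 2 ∂(ν j) = 1) ∧
    ∀ j s, ∫ z, Real.exp (s * z) ∂(ν j) ≤ Real.exp (Ca * s ^ 2)

/-- Covariance assumption: Σ psd with Tr[Σ] = d and ‖Σ‖ ≤ Ca, and `Sigh` its psd square root. -/
def CovOK (Ca : ℝ) {d : ℕ} (Sig Sigh : Matrix (Fin d) (Fin d) ℝ) : Prop :=
  Sig.PosSemidef ∧ Sigh.PosSemidef ∧ Sigh * Sigh = Sig ∧ Sig.trace = (d : ℝ) ∧ spNorm Sig ≤ Ca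

/-- Joint law of the n·d independent entries of x̄₁, …, x̄ₙ. -/
def dataMeasure (n d : ℕ) (ν : Fin d → Measure ℝ) [∀ j, IsProbabilityMeasure (ν j)] :
    Measure ((Fin n × Fin d) → ℝ) :=
  Measure.pi fun p => ν p.2

/-- The law D of a single datapoint x = Σ^{1/2} x̄. -/
def dataDist {d : ℕ} (Sigh : Matrix (Fin d) (Fin d) ℝ) (ν : Fin d → Measure ℝ)
    [∀ j, IsProbabilityMeasure (ν j)] : Measure (Fin d → ℝ) :=
  (Measure.pi fun j => ν j).map fun z => Sigh.mulVec z

/-- The data matrix X with rows xᵢ = Σ^{1/2} x̄ᵢ. -/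
def designX {n d : ℕ} (Sigh : Matrix (Fin d) (Fin d) ℝ) (ω : (Fin n × Fin d) → ℝ) :
    Matrix (Fin n) (Fin d) ℝ :=
  Matrix.of fun i j => Sigh.mulVec (fun k => ω (i, k)) j

/-- Law of the i.i.d. N(0,1) entries of the first m/2 rows of W(0). -/
def gaussMeasure (m2 d : ℕ) : Measure ((Fin m2 × Fin d) → ℝ) :=
  Measure.pi fun _ => gaussianReal 0 1

/-- Law of the i.i.d. uniform signs of the first m/2 entries of v(0) (encoded by booleans). -/
def signMeasure (m2 : ℕ) : Measure (Fin m2 → Bool) :=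
  Measure.pi fun _ => (PMF.uniformOfFintype Bool).toMeasure

/-- Symmetric initialization of the first layer: the second half duplicates the first half. -/
def symmW {m2 d : ℕ} (g : (Fin m2 × Fin d) → ℝ) : Matrix (Fin (2 * m2)) (Fin d) ℝ :=
  Matrix.of fun r j =>
    if h : (r : ℕ) < m2 then g (⟨r, h⟩, j)
    else g (⟨(r : ℕ) - m2, by have := r.isLt; omega⟩, j)

/-- Symmetric initialization of the second layer: the second half negates the first half. -/
def symmV {m2 : ℕ} (b : Fin m2 → Bool) : Fin (2 * m2) → ℝ := fun r =>
  if h : (r : ℕ) < m2 then (if b ⟨r, h⟩ then 1 else -1)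
  else (if b ⟨(r : ℕ) - m2, by have := r.isLt; omega⟩ then -1 else 1)

/-- First-layer NTK matrix. -/
def Theta1 {n m d : ℕ} (φd : ℝ → ℝ) (X : Matrix (Fin n) (Fin d) ℝ)
    (W : Matrix (Fin m) (Fin d) ℝ) : Matrix (Fin n) (Fin n) ℝ :=
  Matrix.of fun i j =>
    ((1 : ℝ) / m) * ∑ r, φd (vdot (X i) (W r) / Real.sqrt d) * φd (vdot (X j) (W r) / Real.sqrt d)
      * (vdot (X i) (X j) / d)

/-- Expected first-layer NTK matrix. -/
def Theta1Star {n d : ℕ} (φd : ℝ → ℝ) (X : Matrix (Fin n) (Fin d) ℝ) :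
    Matrix (Fin n) (Fin n) ℝ :=
  Matrix.of fun i j =>
    (∫ w, φd (vdot (X i) w / Real.sqrt d) * φd (vdot (X j) w / Real.sqrt d)
        ∂(stdGaussian (Fin d))) * (vdot (X i) (X j) / d)

/-- Θ^{lin1} = (ζ² X Xᵀ + ν² 𝟏𝟏ᵀ)/d. -/
def ThetaLin1 {n d : ℕ} (ζ ν2 : ℝ) (X : Matrix (Fin n) (Fin d) ℝ) :
    Matrix (Fin n) (Fin n) ℝ :=
  Matrix.of fun i j => (ζ ^ 2 * vdot (X i) (X j) + ν2) / d

/-- Second-layer NTK matrix. -/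
def Theta2 {n m d : ℕ} (φ : ℝ → ℝ) (X : Matrix (Fin n) (Fin d) ℝ)
    (W : Matrix (Fin m) (Fin d) ℝ) : Matrix (Fin n) (Fin n) ℝ :=
  Matrix.of fun i j =>
    ((1 : ℝ) / m) * ∑ r, φ (vdot (X i) (W r) / Real.sqrt d) * φ (vdot (X j) (W r) / Real.sqrt d)

/-- Expected second-layer NTK matrix. -/
def Theta2Star {n d : ℕ} (φ : ℝ → ℝ) (X : Matrix (Fin n) (Fin d) ℝ) :
    Matrix (Fin n) (Fin n) ℝ :=
  Matrix.of fun i j =>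
    ∫ w, φ (vdot (X i) w / Real.sqrt d) * φ (vdot (X j) w / Real.sqrt d) ∂(stdGaussian (Fin d))

/-- Θ^{lin2} = (ζ² X Xᵀ + ν²/2 𝟏𝟏ᵀ)/d + q qᵀ. -/
def ThetaLin2 {n d : ℕ} (φ φd : ℝ → ℝ) (Sig : Matrix (Fin d) (Fin d) ℝ)
    (X : Matrix (Fin n) (Fin d) ℝ) : Matrix (Fin n) (Fin n) ℝ :=
  Matrix.of fun i j =>
    (zetaOf φd ^ 2 * vdot (X i) (X j) + nuSqOf φd Sig / 2) / d + qEnt φ (X i) * qEnt φ (X j)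

/-- Θ^{lin} = (2ζ² X Xᵀ + (3/2)ν² 𝟏𝟏ᵀ)/d + q qᵀ. -/
def ThetaLinBoth {n d : ℕ} (φ φd : ℝ → ℝ) (Sig : Matrix (Fin d) (Fin d) ℝ)
    (X : Matrix (Fin n) (Fin d) ℝ) : Matrix (Fin n) (Fin n) ℝ :=
  Matrix.of fun i j =>
    (2 * zetaOf φd ^ 2 * vdot (X i) (X j) + (3 / 2) * nuSqOf φd Sig) / d
      + qEnt φ (X i) * qEnt φ (X j)

/-- First-layer Jacobian J₁(W, v) ∈ ℝ^{n × md}. -/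
def J1 {n m d : ℕ} (φd : ℝ → ℝ) (X : Matrix (Fin n) (Fin d) ℝ)
    (W : Matrix (Fin m) (Fin d) ℝ) (v : Fin m → ℝ) : Matrix (Fin n) (Fin m × Fin d) ℝ :=
  Matrix.of fun i p =>
    (1 / Real.sqrt ((m : ℝ) * d)) * v p.1 * φd (vdot (X i) (W p.1) / Real.sqrt d) * X i p.2

/-- Second-layer Jacobian J₂(W) ∈ ℝ^{n × m}. -/
def J2 {n m d : ℕ} (φ : ℝ → ℝ) (X : Matrix (Fin n) (Fin d) ℝ)
    (W : Matrix (Fin m) (Fin d) ℝ) : Matrix (Fin n) (Fin m) ℝ :=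
  Matrix.of fun i r => (1 / Real.sqrt (m : ℝ)) * φ (vdot (X i) (W r) / Real.sqrt d)

/-- Full Jacobian J(W, v) = [J₁(W,v), J₂(W)]. -/
def Jfull {n m d : ℕ} (φ φd : ℝ → ℝ) (X : Matrix (Fin n) (Fin d) ℝ)
    (W : Matrix (Fin m) (Fin d) ℝ) (v : Fin m → ℝ) :
    Matrix (Fin n) ((Fin m × Fin d) ⊕ Fin m) ℝ :=
  Matrix.of fun i p => Sum.elim (fun pq => J1 φd X W v i pq) (fun r => J2 φ X W i r) p

/-- The two-layer network f(x; W, v) = (1/√m) Σ_r v_r φ(w_rᵀ x/√d). -/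
def nnOut {m d : ℕ} (φ : ℝ → ℝ) (W : Matrix (Fin m) (Fin d) ℝ) (v : Fin m → ℝ)
    (x : Fin d → ℝ) : ℝ :=
  (1 / Real.sqrt (m : ℝ)) * ∑ r, v r * φ (vdot (W r) x / Real.sqrt d)

/-- Gradient of the empirical squared loss with respect to the first-layer weights. -/
def gradW1 {n m d : ℕ} (φ φd : ℝ → ℝ) (X : Matrix (Fin n) (Fin d) ℝ) (y : Fin n → ℝ)
    (v : Fin m → ℝ) (W : Matrix (Fin m) (Fin d) ℝ) : Matrix (Fin m) (Fin d) ℝ :=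
  Matrix.of fun r j =>
    ((1 : ℝ) / n) * ∑ i, (nnOut φ W v (X i) - y i) *
      ((1 / Real.sqrt ((m : ℝ) * d)) * v r * φd (vdot (W r) (X i) / Real.sqrt d) * X i j)

/-- Gradient of the empirical squared loss with respect to the second-layer weights. -/
def gradV2 {n m d : ℕ} (φ : ℝ → ℝ) (X : Matrix (Fin n) (Fin d) ℝ) (y : Fin n → ℝ)
    (W : Matrix (Fin m) (Fin d) ℝ) (v : Fin m → ℝ) : Fin m → ℝ := fun r =>
  ((1 : ℝ) / n) * ∑ i, (nnOut φ W v (X i) - y i) *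
    ((1 / Real.sqrt (m : ℝ)) * φ (vdot (W r) (X i) / Real.sqrt d))

/-- One gradient descent step for a linear model β ↦ βᵀψ(x), with learning rate η. -/
def linStep {n d D : ℕ} (η : ℝ) (ψ : (Fin d → ℝ) → Fin D → ℝ)
    (X : Matrix (Fin n) (Fin d) ℝ) (y : Fin n → ℝ) (β : Fin D → ℝ) : Fin D → ℝ :=
  β - (η / n) • fun k => ∑ i, (vdot β (ψ (X i)) - y i) * ψ (X i) k

/-- ψ₁(x) = (ζ x/√d, ν/√d). -/
def psi1 {d : ℕ} (φd : ℝ → ℝ) (Sig : Matrix (Fin d) (Fin d) ℝ) (x : Fin d → ℝ) :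
    Fin (d + 1) → ℝ := fun k =>
  if h : (k : ℕ) < d then zetaOf φd * x ⟨k, h⟩ / Real.sqrt d
  else Real.sqrt (nuSqOf φd Sig) / Real.sqrt d

/-- ψ₂(x) = (ζ x/√d, ν/√(2d), q(x)). -/
def psi2 {d : ℕ} (φ φd : ℝ → ℝ) (Sig : Matrix (Fin d) (Fin d) ℝ) (x : Fin d → ℝ) :
    Fin (d + 2) → ℝ := fun k =>
  if h : (k : ℕ) < d then zetaOf φd * x ⟨k, h⟩ / Real.sqrt d
  else if (k : ℕ) = d then Real.sqrt (nuSqOf φd Sig) / Real.sqrt (2 * (d : ℝ))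
  else qEnt φ x

/-- ψ(x) = (√2 ζ x/√d, √(3/2) ν/√d, q(x)). -/
def psiBoth {d : ℕ} (φ φd : ℝ → ℝ) (Sig : Matrix (Fin d) (Fin d) ℝ) (x : Fin d → ℝ) :
    Fin (d + 2) → ℝ := fun k =>
  if h : (k : ℕ) < d then Real.sqrt 2 * zetaOf φd * x ⟨k, h⟩ / Real.sqrt d
  else if (k : ℕ) = d then Real.sqrt (3 / 2) * Real.sqrt (nuSqOf φd Sig) / Real.sqrt d
  else qEnt φ x

/-- Circular patch x[k:k+q] of size q (indices mod d). -/
def patch {d : ℕ} (q : ℕ) (hd : 0 < d) (x : Fin d → ℝ) (k : Fin d) : Fin q → ℝ :=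
  fun l => x ⟨((k : ℕ) + (l : ℕ)) % d, Nat.mod_lt _ hd⟩

/-- The error function. -/
def erf (z : ℝ) : ℝ := (2 / Real.sqrt Real.pi) * ∫ t in (0 : ℝ)..z, Real.exp (-(t ^ 2))

/-- The derivative of the error function. -/
def erfDeriv (z : ℝ) : ℝ := (2 / Real.sqrt Real.pi) * Real.exp (-(z ^ 2))

/-- The infinite-width NTK matrix of the one-hidden-layer CNN. -/
def ThetaCNN {n d : ℕ} (q : ℕ) (hd : 0 < d) (φ φd : ℝ → ℝ)
    (X : Matrix (Fin n) (Fin d) ℝ) : Matrix (Fin n) (Fin n) ℝ :=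
  Matrix.of fun i j =>
    ∫ w, (((1 : ℝ) / d) * ∑ k, φ (vdot w (patch q hd (X i) k) / Real.sqrt q)
            * φ (vdot w (patch q hd (X j) k) / Real.sqrt q)
          + ((1 : ℝ) / d) * ∑ k, φd (vdot w (patch q hd (X i) k) / Real.sqrt q)
            * φd (vdot w (patch q hd (X j) k) / Real.sqrt q)
            * (vdot (patch q hd (X i) k) (patch q hd (X j) k) / q))
      ∂(stdGaussian (Fin q))

/-- Uniform measure on the boolean hypercube (encoding {±1}^{n×d}). -/
def hcubeMeasure (n d : ℕ) : Measure ((Fin n × Fin d) → Bool) :=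
  Measure.pi fun _ => (PMF.uniformOfFintype Bool).toMeasure

/-- Data matrix of hypercube data. -/
def hcubeX {n d : ℕ} (ω : (Fin n × Fin d) → Bool) : Matrix (Fin n) (Fin d) ℝ :=
  Matrix.of fun i j => if ω (i, j) then 1 else -1


/-! ### Auxiliary infrastructure for `statement0` -/

open scoped RealInnerProductSpace

section Statement0Aux

/-- Pi vector as Euclidean space element. -/
def toE {ι : Type*} [Fintype ι] (x : ι → ℝ) : EuclideanSpace ℝ ι := (WithLp.equiv 2 _).symm x

variable {ι κ : Type*} [Fintype ι] [Fintype κ]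

lemma vnorm_eq (x : ι → ℝ) : vnorm x = ‖toE x‖ := by
  rw [vnorm, EuclideanSpace.norm_eq]
  congr 1; apply Finset.sum_congr rfl; intro i _
  rw [Real.norm_eq_abs, sq_abs]; rfl

/-- The matrix as CLM between Euclidean spaces. -/
def mcl [DecidableEq κ] (A : Matrix ι κ ℝ) : EuclideanSpace ℝ κ →L[ℝ] EuclideanSpace ℝ ι :=
  LinearMap.toContinuousLinearMap (Matrix.toEuclideanLin A)

lemma mcl_apply [DecidableEq κ] (A : Matrix ι κ ℝ) (x : κ → ℝ) :
    mcl A (toE x) = toE (A.mulVec x) := rfl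

lemma spNorm_eq [DecidableEq κ] (A : Matrix ι κ ℝ) : spNorm A = ‖mcl A‖ := by
  rw [← (mcl A).sSup_unitClosedBall_eq_norm, spNorm]
  congr 1
  ext c
  simp only [Set.mem_image, Set.mem_setOf_eq, mem_closedBall_zero_iff]
  constructor
  · rintro ⟨x, hx, rfl⟩
    exact ⟨toE x, by rwa [← vnorm_eq], by rw [vnorm_eq]; rfl⟩
  · rintro ⟨x, hx, rfl⟩
    exact ⟨(WithLp.equiv 2 _) x, by rw [vnorm_eq]; exact hx, by rw [vnorm_eq]; rfl⟩

lemma norm_mulVec_le (A : Matrix ι κ ℝ) (x : κ → ℝ) :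
    ‖toE (A.mulVec x)‖ ≤ spNorm A * ‖toE x‖ := by
  classical
  rw [spNorm_eq, ← mcl_apply]; exact (mcl A).le_opNorm _

lemma spNorm_nonneg (A : Matrix ι κ ℝ) : 0 ≤ spNorm A := by
  classical
  rw [spNorm_eq]; exact norm_nonneg _

lemma inner_toE (a b : ι → ℝ) : ⟪toE a, toE b⟫ = ∑ i, a i * b i := by
  simp [PiLp.inner_apply, toE, RCLike.inner_apply]
  exact Finset.sum_congr rfl (fun i _ => mul_comm _ _)

lemma inner_mulVec (A : Matrix ι κ ℝ) (x : κ → ℝ) (y : ι → ℝ) :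
    ⟪toE (A.mulVec x), toE y⟫ = ⟪toE x, toE (A.transpose.mulVec y)⟫ := by
  rw [inner_toE, inner_toE]
  simp only [Matrix.mulVec, dotProduct, Matrix.transpose_apply, Finset.sum_mul,
    Finset.mul_sum]
  rw [Finset.sum_comm]
  apply Finset.sum_congr rfl; intro i _
  apply Finset.sum_congr rfl; intro j _
  ring

lemma inner_K (Φ : Matrix ι κ ℝ) (v : ι → ℝ) :
    ⟪toE v, toE ((Φ * Φ.transpose).mulVec v)⟫ = ‖toE (Φ.transpose.mulVec v)‖ ^ 2 := by
  rw [← Matrix.mulVec_mulVec, real_inner_comm, inner_mulVec, real_inner_self_eq_norm_sq]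

lemma inner_K_nonneg (Φ : Matrix ι κ ℝ) (v : ι → ℝ) :
    0 ≤ ⟪toE v, toE ((Φ * Φ.transpose).mulVec v)⟫ := by
  rw [inner_K]; positivity

lemma inner_mulVec_le (K : Matrix ι ι ℝ) (r : ι → ℝ) :
    ⟪toE r, toE (K.mulVec r)⟫ ≤ spNorm K * ‖toE r‖ ^ 2 := by
  calc ⟪toE r, toE (K.mulVec r)⟫ ≤ ‖toE r‖ * ‖toE (K.mulVec r)‖ := real_inner_le_norm _ _
    _ ≤ ‖toE r‖ * (spNorm K * ‖toE r‖) :=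
        mul_le_mul_of_nonneg_left (norm_mulVec_le K r) (norm_nonneg _)
    _ = spNorm K * ‖toE r‖ ^ 2 := by ring

lemma normKv_sq_le (Φ : Matrix ι κ ℝ) (v : ι → ℝ) :
    ‖toE ((Φ * Φ.transpose).mulVec v)‖ ^ 2 ≤
      spNorm (Φ * Φ.transpose) * ⟪toE v, toE ((Φ * Φ.transpose).mulVec v)⟫ := by
  set K := Φ * Φ.transpose with hK
  set p := K.mulVec v with hp
  have h1 : ‖toE p‖ ^ 2 = ⟪toE (Φ.transpose.mulVec v), toE (Φ.transpose.mulVec p)⟫ := by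
    rw [← real_inner_self_eq_norm_sq, hp, hK, ← Matrix.mulVec_mulVec, inner_mulVec,
      Matrix.mulVec_mulVec]
  have h2 : (‖toE p‖ ^ 2) ^ 2
      ≤ ‖toE (Φ.transpose.mulVec v)‖ ^ 2 * ‖toE (Φ.transpose.mulVec p)‖ ^ 2 := by
    rw [h1]
    calc ⟪toE (Φ.transpose.mulVec v), toE (Φ.transpose.mulVec p)⟫ ^ 2
        ≤ (‖toE (Φ.transpose.mulVec v)‖ * ‖toE (Φ.transpose.mulVec p)‖) ^ 2 := by
          have := abs_real_inner_le_norm (toE (Φ.transpose.mulVec v)) (toE (Φ.transpose.mulVec p))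
          nlinarith [abs_nonneg (⟪toE (Φ.transpose.mulVec v), toE (Φ.transpose.mulVec p)⟫),
            sq_abs (⟪toE (Φ.transpose.mulVec v), toE (Φ.transpose.mulVec p)⟫)]
      _ = _ := by ring
  have h3 : ‖toE (Φ.transpose.mulVec v)‖ ^ 2 = ⟪toE v, toE (K.mulVec v)⟫ := (inner_K Φ v).symm
  have h4 : ‖toE (Φ.transpose.mulVec p)‖ ^ 2 = ⟪toE p, toE (K.mulVec p)⟫ := (inner_K Φ p).symm
  have h5 : ⟪toE p, toE (K.mulVec p)⟫ ≤ spNorm K * ‖toE p‖ ^ 2 := inner_mulVec_le K p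
  have h6 : (‖toE p‖ ^ 2) ^ 2 ≤ ⟪toE v, toE (K.mulVec v)⟫ * (spNorm K * ‖toE p‖ ^ 2) := by
    calc (‖toE p‖ ^ 2) ^ 2
        ≤ ‖toE (Φ.transpose.mulVec v)‖ ^ 2 * ‖toE (Φ.transpose.mulVec p)‖ ^ 2 := h2
      _ = ⟪toE v, toE (K.mulVec v)⟫ * ⟪toE p, toE (K.mulVec p)⟫ := by rw [h3, h4]
      _ ≤ ⟪toE v, toE (K.mulVec v)⟫ * (spNorm K * ‖toE p‖ ^ 2) := by
          apply mul_le_mul_of_nonneg_left h5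
          rw [← h3]; positivity
  rcases eq_or_lt_of_le (sq_nonneg ‖toE p‖) with h | h
  · rw [← h]; exact mul_nonneg (spNorm_nonneg _) (inner_K_nonneg Φ v)
  · have := mul_le_mul_of_nonneg_right h6 (le_of_lt (inv_pos.mpr h))
    calc ‖toE p‖ ^ 2 = (‖toE p‖ ^ 2) ^ 2 * (‖toE p‖ ^ 2)⁻¹ := by field_simp
      _ ≤ (⟪toE v, toE (K.mulVec v)⟫ * (spNorm K * ‖toE p‖ ^ 2)) * (‖toE p‖ ^ 2)⁻¹ := this
      _ = spNorm K * ⟪toE v, toE (K.mulVec v)⟫ := by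
        rw [mul_assoc, mul_assoc, mul_inv_cancel₀ h.ne', mul_one, mul_comm]

lemma contract_sq (Φ : Matrix ι κ ℝ) (v : ι → ℝ) {s : ℝ} (hs : 0 ≤ s)
    (hsK : s * spNorm (Φ * Φ.transpose) ≤ 1) :
    ‖toE v - s • toE ((Φ * Φ.transpose).mulVec v)‖ ^ 2
      ≤ ‖toE v‖ ^ 2 - s * ⟪toE v, toE ((Φ * Φ.transpose).mulVec v)⟫ := by
  have hexp : ‖toE v - s • toE ((Φ * Φ.transpose).mulVec v)‖ ^ 2
      = ‖toE v‖ ^ 2 - 2 * (s * ⟪toE v, toE ((Φ * Φ.transpose).mulVec v)⟫)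
        + s ^ 2 * ‖toE ((Φ * Φ.transpose).mulVec v)‖ ^ 2 := by
    rw [norm_sub_sq_real, norm_smul, real_inner_smul_right]
    simp [Real.norm_eq_abs, abs_of_nonneg hs]
    ring
  have h1 := normKv_sq_le Φ v
  have h2 := inner_K_nonneg Φ v
  have h3 := spNorm_nonneg (Φ * Φ.transpose)
  nlinarith [mul_le_mul_of_nonneg_left h1 (sq_nonneg s), mul_nonneg hs h2,
    mul_le_mul_of_nonneg_right hsK (mul_nonneg hs h2)]

lemma contract_norm (Φ : Matrix ι κ ℝ) (v : ι → ℝ) {s : ℝ} (hs : 0 ≤ s)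
    (hsK : s * spNorm (Φ * Φ.transpose) ≤ 1) :
    ‖toE v - s • toE ((Φ * Φ.transpose).mulVec v)‖ ≤ ‖toE v‖ := by
  have h := contract_sq Φ v hs hsK
  have h2 := inner_K_nonneg Φ v
  nlinarith [norm_nonneg (toE v - s • toE ((Φ * Φ.transpose).mulVec v)), norm_nonneg (toE v),
    mul_nonneg hs h2]

lemma sq_le_imp {a b : ℝ} (hb : 0 ≤ b) (h : a ^ 2 ≤ b ^ 2) (ha : 0 ≤ a) : a ≤ b := by nlinarith

lemma sq_sum_le {m : ℕ} (a : ℕ → ℝ) :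
    (∑ i ∈ Finset.range m, a i) ^ 2 ≤ (m : ℝ) * ∑ i ∈ Finset.range m, (a i) ^ 2 := by
  have := sq_sum_le_card_mul_sum_sq (s := Finset.range m) (f := a)
  simpa using this

lemma Jr_bound {ε : ℝ} (Jm : Matrix ι κ ℝ) (K : Matrix ι ι ℝ) (r : ι → ℝ)
    (hJJK : spNorm (Jm * Jm.transpose - K) ≤ ε) :
    ‖toE (Jm.transpose.mulVec r)‖ ^ 2 ≤ ⟪toE r, toE (K.mulVec r)⟫ + ε * ‖toE r‖ ^ 2 := by
  have h1 : ‖toE (Jm.transpose.mulVec r)‖ ^ 2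
      = ⟪toE r, toE ((Jm * Jm.transpose).mulVec r)⟫ := (inner_K Jm r).symm
  have h2 : (Jm * Jm.transpose).mulVec r
      = K.mulVec r + (Jm * Jm.transpose - K).mulVec r := by
    rw [Matrix.sub_mulVec]; abel
  have h4 : toE (K.mulVec r + (Jm * Jm.transpose - K).mulVec r)
      = toE (K.mulVec r) + toE ((Jm * Jm.transpose - K).mulVec r) := rfl
  have h3 : ⟪toE r, toE ((Jm * Jm.transpose - K).mulVec r)⟫ ≤ ε * ‖toE r‖ ^ 2 := by
    calc ⟪toE r, toE ((Jm * Jm.transpose - K).mulVec r)⟫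
        ≤ ‖toE r‖ * ‖toE ((Jm * Jm.transpose - K).mulVec r)‖ := real_inner_le_norm _ _
      _ ≤ ‖toE r‖ * (spNorm (Jm * Jm.transpose - K) * ‖toE r‖) :=
          mul_le_mul_of_nonneg_left (norm_mulVec_le _ _) (norm_nonneg _)
      _ ≤ ‖toE r‖ * (ε * ‖toE r‖) := by
          apply mul_le_mul_of_nonneg_left _ (norm_nonneg _)
          exact mul_le_mul_of_nonneg_right hJJK (norm_nonneg _)
      _ = ε * ‖toE r‖ ^ 2 := by ring
  rw [h1, h2, h4, inner_add_right]
  linarith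

lemma res_step_abstract (Φ : Matrix ι κ ℝ) {s ε : ℝ} (hs : 0 ≤ s) (hε : 0 ≤ ε)
    (hsK : s * spNorm (Φ * Φ.transpose) ≤ 1) (hsε : s * ε ≤ 1)
    (r r' : ι → ℝ)
    (hd : ‖toE r' - (toE r - s • toE ((Φ * Φ.transpose).mulVec r))‖ ≤ s * ε * ‖toE r‖) :
    ‖toE r'‖ ^ 2 ≤ ‖toE r‖ ^ 2 - s * ⟪toE r, toE ((Φ * Φ.transpose).mulVec r)⟫
      + 3 * (s * ε) * ‖toE r‖ ^ 2 := by
  have h1 := contract_sq Φ r hs hsK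
  have h2 := contract_norm Φ r hs hsK
  have h3 : ‖toE r'‖ ≤ ‖toE r - s • toE ((Φ * Φ.transpose).mulVec r)‖ + s * ε * ‖toE r‖ := by
    calc ‖toE r'‖ = ‖(toE r - s • toE ((Φ * Φ.transpose).mulVec r))
          + (toE r' - (toE r - s • toE ((Φ * Φ.transpose).mulVec r)))‖ := by
          congr 1; abel
      _ ≤ _ := le_trans (norm_add_le _ _) (by linarith)
  have hc : 0 ≤ s * ε := mul_nonneg hs hε
  have h4 : ‖toE r'‖^2 ≤ (‖toE r - s • toE ((Φ * Φ.transpose).mulVec r)‖ + s * ε * ‖toE r‖)^2 :=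
    pow_le_pow_left₀ (norm_nonneg _) h3 2
  have h6 := mul_le_mul_of_nonneg_left h2
    (show (0:ℝ) ≤ 2 * (s * ε) * ‖toE r‖ by positivity)
  have h7 : (s*ε)^2 * ‖toE r‖^2 ≤ (s*ε) * ‖toE r‖^2 :=
    mul_le_mul_of_nonneg_right (by nlinarith) (sq_nonneg _)
  nlinarith [h1, h4, h6, h7]

def toECLM (ι : Type*) [Fintype ι] : (ι → ℝ) →L[ℝ] EuclideanSpace ℝ ι :=
  (PiLp.continuousLinearEquiv 2 ℝ (fun _ : ι => ℝ)).symm.toContinuousLinearMap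

lemma toECLM_apply {ι : Type*} [Fintype ι] (x : ι → ℝ) : toECLM ι x = toE x := rfl

variable {N n : ℕ} {f : (Fin N → ℝ) → (Fin n → ℝ)} {J : (Fin N → ℝ) → Matrix (Fin n) (Fin N) ℝ}

lemma ftc (hder : ∀ θ₀ : Fin N → ℝ,
      HasFDerivAt f (LinearMap.toContinuousLinearMap (Matrix.mulVecLin (J θ₀))) θ₀)
    (hJc : Continuous J) (θ d : Fin N → ℝ) :
    f (θ + d) - f θ = ∫ u in (0:ℝ)..1, (J (θ + u • d)).mulVec d := by
  have hcont : Continuous fun u : ℝ => (J (θ + u • d)).mulVec d := by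
    apply Continuous.matrix_mulVec _ continuous_const
    exact hJc.comp (continuous_const.add (continuous_id.smul continuous_const))
  have hderiv : ∀ u ∈ Set.uIcc (0:ℝ) 1,
      HasDerivAt (fun u : ℝ => f (θ + u • d)) ((J (θ + u • d)).mulVec d) u := by
    intro u _
    have hc : HasDerivAt (fun u : ℝ => θ + u • d) d u := by
      simpa using ((hasDerivAt_id u).smul_const d).const_add θ
    have := (hder (θ + u • d)).comp_hasDerivAt u hc
    exact this
  have := intervalIntegral.integral_eq_sub_of_hasDerivAt hderiv
    (hcont.intervalIntegrable 0 1)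
  rw [this]
  simp

/-- segment point stays in the ball -/
lemma seg_ball {θ θ0 d : Fin N → ℝ} {R : ℝ} (hθ : vnorm (θ - θ0) ≤ R)
    (hθ' : vnorm (θ + d - θ0) ≤ R) {u : ℝ} (hu0 : 0 ≤ u) (hu1 : u ≤ 1) :
    vnorm (θ + u • d - θ0) ≤ R := by
  have hdecomp : θ + u • d - θ0 = (1 - u) • (θ - θ0) + u • (θ + d - θ0) := by
    funext i
    simp [Pi.add_apply, Pi.sub_apply, Pi.smul_apply, smul_eq_mul]
    ring
  rw [hdecomp, vnorm_eq]
  have : toE ((1 - u) • (θ - θ0) + u • (θ + d - θ0))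
      = (1 - u) • toE (θ - θ0) + u • toE (θ + d - θ0) := rfl
  rw [this]
  calc ‖(1 - u) • toE (θ - θ0) + u • toE (θ + d - θ0)‖
      ≤ ‖(1 - u) • toE (θ - θ0)‖ + ‖u • toE (θ + d - θ0)‖ := norm_add_le _ _
    _ = (1 - u) * ‖toE (θ - θ0)‖ + u * ‖toE (θ + d - θ0)‖ := by
        rw [norm_smul, norm_smul, Real.norm_eq_abs, Real.norm_eq_abs,
          abs_of_nonneg (by linarith), abs_of_nonneg hu0]
    _ ≤ (1 - u) * R + u * R := by
        rw [vnorm_eq] at hθ hθ'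
        apply add_le_add
        · exact mul_le_mul_of_nonneg_left hθ (by linarith)
        · exact mul_le_mul_of_nonneg_left hθ' hu0
    _ = R := by ring

lemma step_key (hder : ∀ θ₀ : Fin N → ℝ,
      HasFDerivAt f (LinearMap.toContinuousLinearMap (Matrix.mulVecLin (J θ₀))) θ₀)
    (hJc : Continuous J) (K : Matrix (Fin n) (Fin n) ℝ) {ε s R : ℝ} (hε : 0 ≤ ε) (hs : 0 ≤ s)
    {θ0 : Fin N → ℝ}
    (hJJ : ∀ θ₁ θ₂ : Fin N → ℝ, vnorm (θ₁ - θ0) ≤ R → vnorm (θ₂ - θ0) ≤ R →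
      spNorm (J θ₁ * (J θ₂).transpose - K) ≤ ε)
    (θ : Fin N → ℝ) (r : Fin n → ℝ)
    (hθ : vnorm (θ - θ0) ≤ R)
    (hθ' : vnorm (θ - s • (J θ).transpose.mulVec r - θ0) ≤ R) :
    ‖toE (f (θ - s • (J θ).transpose.mulVec r) - f θ) + s • toE (K.mulVec r)‖
      ≤ s * ε * ‖toE r‖ := by
  set d : Fin N → ℝ := -(s • (J θ).transpose.mulVec r) with hd
  have hθd : θ - s • (J θ).transpose.mulVec r = θ + d := by rw [hd]; abel
  rw [hθd] at hθ' ⊢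
  -- the integrand and its rewriting
  have hint : ∀ B : Matrix (Fin n) (Fin N) ℝ, B.mulVec d
      = (-s) • ((B * (J θ).transpose - K).mulVec r) - s • (K.mulVec r) := by
    intro B
    rw [hd, Matrix.mulVec_neg, Matrix.mulVec_smul, Matrix.mulVec_mulVec,
      Matrix.sub_mulVec]
    simp only [smul_sub, neg_smul]
    abel
  have hcont : Continuous fun u : ℝ => ((J (θ + u • d) * (J θ).transpose - K).mulVec r) := by
    apply Continuous.matrix_mulVec _ continuous_const
    apply Continuous.sub _ continuous_const
    apply Continuous.matrix_mul _ continuous_const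
    exact hJc.comp (continuous_const.add (continuous_id.smul continuous_const))
  have h1 := ftc hder hJc θ d
  -- pass to Euclidean space
  have h2 : toE (f (θ + d) - f θ)
      = ∫ u in (0:ℝ)..1, ((-s) • toE ((J (θ + u • d) * (J θ).transpose - K).mulVec r)
          - s • toE (K.mulVec r)) := by
    have hI : IntervalIntegrable (fun u : ℝ => (J (θ + u • d)).mulVec d)
        MeasureTheory.volume 0 1 := by
      apply Continuous.intervalIntegrable
      apply Continuous.matrix_mulVec _ continuous_const
      exact hJc.comp (continuous_const.add (continuous_id.smul continuous_const))
    have := (toECLM (Fin n)).intervalIntegral_comp_comm hI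
    rw [h1, ← toECLM_apply, ← this]
    apply intervalIntegral.integral_congr
    intro u _
    show toECLM (Fin n) ((J (θ + u • d)).mulVec d) = _
    rw [toECLM_apply, hint (J (θ + u • d))]
    rfl
  have h3 : toE (f (θ + d) - f θ) + s • toE (K.mulVec r)
      = ∫ u in (0:ℝ)..1, (-s) • toE ((J (θ + u • d) * (J θ).transpose - K).mulVec r) := by
    rw [h2]
    rw [intervalIntegral.integral_sub _ (intervalIntegrable_const)]
    · simp
    · exact (((toECLM (Fin n)).continuous.comp hcont).const_smul (-s)).intervalIntegrable 0 1
  rw [h3]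
  have := intervalIntegral.norm_integral_le_of_norm_le_const
    (C := s * ε * ‖toE r‖) (f := fun u : ℝ =>
      (-s) • toE ((J (θ + u • d) * (J θ).transpose - K).mulVec r)) (a := 0) (b := 1) ?_
  · simpa using this
  · intro u hu
    rw [Set.uIoc_of_le (by norm_num : (0:ℝ) ≤ 1)] at hu
    have hball : vnorm (θ + u • d - θ0) ≤ R := seg_ball hθ hθ' (le_of_lt hu.1) hu.2
    have hbd := hJJ (θ + u • d) θ hball hθ
    calc ‖(-s) • toE ((J (θ + u • d) * (J θ).transpose - K).mulVec r)‖
        = s * ‖toE ((J (θ + u • d) * (J θ).transpose - K).mulVec r)‖ := by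
          rw [norm_smul, Real.norm_eq_abs, abs_neg, abs_of_nonneg hs]
      _ ≤ s * (spNorm (J (θ + u • d) * (J θ).transpose - K) * ‖toE r‖) := by
          exact mul_le_mul_of_nonneg_left (norm_mulVec_le _ _) hs
      _ ≤ s * (ε * ‖toE r‖) := by
          apply mul_le_mul_of_nonneg_left _ hs
          exact mul_le_mul_of_nonneg_right hbd (norm_nonneg _)
      _ = s * ε * ‖toE r‖ := by ring


end Statement0Aux


set_option maxHeartbeats 2000000 in
/-- early-time closeness of the GD dynamics of a nonlinear least-squares
problem and of an associated linear least-squares problem. -/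
theorem statement0 :
    ∃ c C : ℝ, 0 < c ∧ 0 < C ∧
      ∀ (N n M : ℕ), 0 < n →
      ∀ (f : (Fin N → ℝ) → (Fin n → ℝ)) (J : (Fin N → ℝ) → Matrix (Fin n) (Fin N) ℝ),
        (∀ θ₀ : Fin N → ℝ,
          HasFDerivAt f (LinearMap.toContinuousLinearMap (Matrix.mulVecLin (J θ₀))) θ₀) →
        Continuous J →
      ∀ y : Fin n → ℝ, vnorm y ≤ Real.sqrt n →
      ∀ (Φ : Matrix (Fin n) (Fin M) ℝ) (η ε R : ℝ) (θ0 : Fin N → ℝ) (ω0 : Fin M → ℝ),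
        0 < η → η ≤ (n : ℝ) / spNorm (Φ * Φ.transpose) →
        0 < ε → ε < spNorm (Φ * Φ.transpose) → 0 < R → R ^ 2 * ε < n →
        (∀ θ₁ θ₂ : Fin N → ℝ, vnorm (θ₁ - θ0) ≤ R → vnorm (θ₂ - θ0) ≤ R →
          spNorm (J θ₁ * (J θ₂).transpose - Φ * Φ.transpose) ≤ ε) →
        f θ0 = 0 → Φ.mulVec ω0 = 0 →
        ∀ t : ℕ, (t : ℝ) ≤ c * R ^ 2 / η →
          vnorm
              (f (iterSeq (fun θ => θ - (η / n) • (J θ).transpose.mulVec (f θ - y)) θ0 t)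
                - Φ.mulVec
                    (iterSeq (fun w => w - (η / n) • Φ.transpose.mulVec (Φ.mulVec w - y)) ω0 t))
            ≤ C * η * t * ε / Real.sqrt n ∧
          vnorm (iterSeq (fun θ => θ - (η / n) • (J θ).transpose.mulVec (f θ - y)) θ0 t - θ0)
            ≤ R ∧
          vnorm (iterSeq (fun w => w - (η / n) • Φ.transpose.mulVec (Φ.mulVec w - y)) ω0 t - ω0)
            ≤ R := by
  refine ⟨1/100, 2, by norm_num, by norm_num, ?_⟩
  intro N n M hn f J hder hJc y hy Φ η ε R θ0 ω0 hη hηK hε hεK hR hRε hJJ hf0 hΦ0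
  have hn' : (0:ℝ) < n := by exact_mod_cast hn
  have hNK : 0 < spNorm (Φ * Φ.transpose) := lt_trans hε hεK
  have hs : 0 < η / n := div_pos hη hn'
  have hηNK : η * spNorm (Φ * Φ.transpose) ≤ n := by
    rw [le_div_iff₀ hNK] at hηK; exact hηK
  have hsK : (η / n) * spNorm (Φ * Φ.transpose) ≤ 1 := by
    rw [div_mul_eq_mul_div, div_le_one hn']; exact hηNK
  have hε' : (0:ℝ) ≤ ε := le_of_lt hε
  have hsε : (η / n) * ε ≤ 1 :=
    le_trans (mul_le_mul_of_nonneg_left (le_of_lt hεK) (le_of_lt hs)) hsK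
  have hsqn : (0:ℝ) < Real.sqrt n := Real.sqrt_pos.mpr hn'
  have hnsq : Real.sqrt n * Real.sqrt n = (n:ℝ) := Real.mul_self_sqrt (le_of_lt hn')
  have hy' : ‖toE y‖ ≤ Real.sqrt n := by rw [← vnorm_eq]; exact hy
  have hRε' : R^2 * ε ≤ n := le_of_lt hRε
  set θs := iterSeq (fun θ => θ - (η / ↑n) • (J θ).transpose.mulVec (f θ - y)) θ0 with hθs
  set ωs := iterSeq (fun w => w - (η / ↑n) • Φ.transpose.mulVec (Φ.mulVec w - y)) ω0 with hωs
  have hθstep : ∀ τ, θs (τ+1) = θs τ - (η/↑n) • (J (θs τ)).transpose.mulVec (f (θs τ) - y) :=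
    fun _ => rfl
  have hωstep : ∀ τ, ωs (τ+1) = ωs τ - (η/↑n) • Φ.transpose.mulVec (Φ.mulVec (ωs τ) - y) :=
    fun _ => rfl
  have hθ00 : θs 0 = θ0 := rfl
  have hω00 : ωs 0 = ω0 := rfl
  -- linear residual dynamics
  have hrlstep : ∀ τ, Φ.mulVec (ωs (τ+1)) - y
      = (Φ.mulVec (ωs τ) - y) - (η/↑n) • (Φ * Φ.transpose).mulVec (Φ.mulVec (ωs τ) - y) := by
    intro τ
    rw [hωstep τ, Matrix.mulVec_sub, Matrix.mulVec_smul, Matrix.mulVec_mulVec]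
    abel
  have hrl0 : Φ.mulVec (ωs 0) - y = -y := by rw [hω00, hΦ0, zero_sub]
  have hrlnorm : ∀ τ, ‖toE (Φ.mulVec (ωs τ) - y)‖ ≤ Real.sqrt n := by
    intro τ; induction τ with
    | zero =>
        rw [hrl0]
        have h : toE (-y) = -toE y := rfl
        rw [h, norm_neg]; exact hy'
    | succ τ ih =>
        have heq : toE (Φ.mulVec (ωs (τ+1)) - y)
            = toE (Φ.mulVec (ωs τ) - y)
              - (η/↑n) • toE ((Φ * Φ.transpose).mulVec (Φ.mulVec (ωs τ) - y)) := by
          rw [hrlstep τ]; rfl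
        rw [heq]
        exact le_trans (contract_norm Φ _ (le_of_lt hs) hsK) ih
  have hyn : ‖toE y‖^2 ≤ (n:ℝ) := by nlinarith [hy', norm_nonneg (toE y)]
  have hlinE : ∀ T : ℕ, ‖toE (Φ.mulVec (ωs T) - y)‖^2
      + (η/↑n) * ∑ i ∈ Finset.range T,
          ⟪toE (Φ.mulVec (ωs i) - y), toE ((Φ * Φ.transpose).mulVec (Φ.mulVec (ωs i) - y))⟫
      ≤ ‖toE y‖^2 := by
    intro T; induction T with
    | zero =>
        rw [hrl0]
        have h : toE (-y) = -toE y := rfl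
        rw [h]
        simp
    | succ T ih =>
        rw [Finset.sum_range_succ]
        have heq : toE (Φ.mulVec (ωs (T+1)) - y)
            = toE (Φ.mulVec (ωs T) - y)
              - (η/↑n) • toE ((Φ * Φ.transpose).mulVec (Φ.mulVec (ωs T) - y)) := by
          rw [hrlstep T]; rfl
        have hc := contract_sq Φ (Φ.mulVec (ωs T) - y) (le_of_lt hs) hsK
        rw [heq, mul_add]
        linarith
  -- ω displacement
  have hωdisp : ∀ τ : ℕ, (τ:ℝ) ≤ 1/100 * R^2 / η → vnorm (ωs τ - ω0) ≤ R := by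
    intro τ hτ
    have hsum : ωs τ - ω0 = ∑ i ∈ Finset.range τ, (ωs (i+1) - ωs i) := by
      rw [Finset.sum_range_sub (f := ωs), hω00]
    have h1 : ‖toE (ωs τ - ω0)‖ ≤ ∑ i ∈ Finset.range τ,
        (η/↑n) * ‖toE (Φ.transpose.mulVec (Φ.mulVec (ωs i) - y))‖ := by
      rw [hsum, ← toECLM_apply, map_sum]
      refine le_trans (norm_sum_le _ _) (Finset.sum_le_sum ?_)
      intro i _
      have hstepi : ωs (i+1) - ωs i
          = -((η/↑n) • Φ.transpose.mulVec (Φ.mulVec (ωs i) - y)) := by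
        rw [hωstep i]; abel
      rw [toECLM_apply, hstepi]
      have h2 : toE (-((η/↑n) • Φ.transpose.mulVec (Φ.mulVec (ωs i) - y)))
          = -((η/↑n) • toE (Φ.transpose.mulVec (Φ.mulVec (ωs i) - y))) := rfl
      rw [h2, norm_neg, norm_smul, Real.norm_eq_abs, abs_of_pos hs]
    have hsSig : (η/↑n) * ∑ i ∈ Finset.range τ,
        ⟪toE (Φ.mulVec (ωs i) - y), toE ((Φ * Φ.transpose).mulVec (Φ.mulVec (ωs i) - y))⟫
        ≤ (n:ℝ) := by
      have := hlinE τ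
      nlinarith [sq_nonneg ‖toE (Φ.mulVec (ωs τ) - y)‖]
    have hsq : (∑ i ∈ Finset.range τ,
        (η/↑n) * ‖toE (Φ.transpose.mulVec (Φ.mulVec (ωs i) - y))‖)^2 ≤ η * τ := by
      refine le_trans (sq_sum_le _) ?_
      have hterm : ∀ i ∈ Finset.range τ,
          ((η/↑n) * ‖toE (Φ.transpose.mulVec (Φ.mulVec (ωs i) - y))‖)^2
          = (η/↑n)^2 * ⟪toE (Φ.mulVec (ωs i) - y),
              toE ((Φ * Φ.transpose).mulVec (Φ.mulVec (ωs i) - y))⟫ := by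
        intro i _
        rw [mul_pow, inner_K]
      rw [Finset.sum_congr rfl hterm, ← Finset.mul_sum]
      have h4 : (η/↑n) * ((η/↑n) * ∑ i ∈ Finset.range τ,
          ⟪toE (Φ.mulVec (ωs i) - y), toE ((Φ * Φ.transpose).mulVec (Φ.mulVec (ωs i) - y))⟫)
          ≤ (η/↑n) * n := mul_le_mul_of_nonneg_left hsSig (le_of_lt hs)
      calc (τ:ℝ) * ((η/↑n)^2 * ∑ i ∈ Finset.range τ,
          ⟪toE (Φ.mulVec (ωs i) - y), toE ((Φ * Φ.transpose).mulVec (Φ.mulVec (ωs i) - y))⟫)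
          = (τ:ℝ) * ((η/↑n) * ((η/↑n) * ∑ i ∈ Finset.range τ,
            ⟪toE (Φ.mulVec (ωs i) - y), toE ((Φ * Φ.transpose).mulVec (Φ.mulVec (ωs i) - y))⟫)) := by
            ring
        _ ≤ (τ:ℝ) * ((η/↑n) * n) := mul_le_mul_of_nonneg_left h4 (Nat.cast_nonneg τ)
        _ = η * τ := by field_simp
    have hsum_nonneg : (0:ℝ) ≤ ∑ i ∈ Finset.range τ,
        (η/↑n) * ‖toE (Φ.transpose.mulVec (Φ.mulVec (ωs i) - y))‖ := by
      apply Finset.sum_nonneg; intro i _; positivity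
    have hωn : ‖toE (ωs τ - ω0)‖^2 ≤ η * τ :=
      le_trans (pow_le_pow_left₀ (norm_nonneg _) h1 2) hsq
    have hητ : η * τ ≤ 1/100 * R^2 := by
      rw [le_div_iff₀ hη] at hτ; linarith
    rw [vnorm_eq]
    apply sq_le_imp (le_of_lt hR) _ (norm_nonneg _)
    nlinarith [hR]
  -- MAIN INDUCTION
  have key : ∀ τ : ℕ, (τ:ℝ) ≤ 1/100 * R^2 / η →
      (∀ i, i ≤ τ → vnorm (θs i - θ0) ≤ R) ∧
      (∀ i, i ≤ τ → ‖toE (f (θs i) - Φ.mulVec (ωs i))‖ ≤ 2 * η * ε * i / Real.sqrt n) := by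
    intro τ
    induction τ with
    | zero =>
        intro _
        constructor
        · intro i hi
          rw [Nat.le_zero.mp hi, hθ00, sub_self, vnorm_eq]
          have h : toE (0 : Fin N → ℝ) = 0 := rfl
          rw [h, norm_zero]; exact le_of_lt hR
        · intro i hi
          rw [Nat.le_zero.mp hi, hθ00, hω00, hf0, hΦ0, sub_self]
          have h : toE (0 : Fin n → ℝ) = 0 := rfl
          rw [h, norm_zero]
          simp
    | succ t ih =>
        intro hτ1
        have hτ : (t:ℝ) ≤ 1/100 * R^2 / η := by
          push_cast at hτ1 ⊢; linarith
        obtain ⟨hball, hδ⟩ := ih hτ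
        have hη1 : η * ((t:ℝ) + 1) ≤ 1/100 * R^2 := by
          rw [le_div_iff₀ hη] at hτ1; push_cast at hτ1; linarith
        -- residual bounds for i ≤ t
        have hrb : ∀ i, i ≤ t → ‖toE (f (θs i) - y)‖ ≤ 2 * Real.sqrt n := by
          intro i hi
          have hid : f (θs i) - y = (f (θs i) - Φ.mulVec (ωs i)) + (Φ.mulVec (ωs i) - y) := by
            abel
          have h2 := hrlnorm i
          have h1 := hδ i hi
          have hi' : (i:ℝ) ≤ (t:ℝ) := by exact_mod_cast hi
          have hηi : η * (i:ℝ) ≤ 1/100 * R^2 := by nlinarith [hη.le]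
          have hδsmall : 2 * η * ε * (i:ℝ) / Real.sqrt n ≤ Real.sqrt n := by
            rw [div_le_iff₀ hsqn, hnsq]
            have hA : η * (i:ℝ) * ε ≤ 1/100 * R^2 * ε :=
              mul_le_mul_of_nonneg_right hηi hε'
            nlinarith [hRε', hn'.le]
          calc ‖toE (f (θs i) - y)‖
              = ‖toE (f (θs i) - Φ.mulVec (ωs i)) + toE (Φ.mulVec (ωs i) - y)‖ := by
                rw [hid]; rfl
            _ ≤ ‖toE (f (θs i) - Φ.mulVec (ωs i))‖ + ‖toE (Φ.mulVec (ωs i) - y)‖ :=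
                norm_add_le _ _
            _ ≤ Real.sqrt n + Real.sqrt n := add_le_add (le_trans h1 hδsmall) h2
            _ = 2 * Real.sqrt n := by ring
        have hrb4 : ∀ i, i ≤ t → ‖toE (f (θs i) - y)‖^2 ≤ 4 * n := by
          intro i hi
          have := hrb i hi
          nlinarith [norm_nonneg (toE (f (θs i) - y))]
        -- step key
        have hstepkey : ∀ i, vnorm (θs i - θ0) ≤ R → vnorm (θs (i+1) - θ0) ≤ R →
            ‖toE (f (θs (i+1)) - y) - (toE (f (θs i) - y)
              - (η/↑n) • toE ((Φ * Φ.transpose).mulVec (f (θs i) - y)))‖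
            ≤ (η/↑n) * ε * ‖toE (f (θs i) - y)‖ := by
          intro i hb1 hb2
          have hb2' : vnorm (θs i - (η/↑n) • (J (θs i)).transpose.mulVec (f (θs i) - y) - θ0)
              ≤ R := by rw [← hθstep i]; exact hb2
          have h := step_key hder hJc (Φ * Φ.transpose) hε' (le_of_lt hs) hJJ (θs i)
            (f (θs i) - y) hb1 hb2'
          rw [← hθstep i] at h
          have hidE : toE (f (θs (i+1)) - y) - (toE (f (θs i) - y)
              - (η/↑n) • toE ((Φ * Φ.transpose).mulVec (f (θs i) - y)))
              = toE (f (θs (i+1)) - f (θs i))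
                + (η/↑n) • toE ((Φ * Φ.transpose).mulVec (f (θs i) - y)) := by
            have e1 : toE (f (θs (i+1)) - y) = toE (f (θs (i+1))) - toE y := rfl
            have e2 : toE (f (θs i) - y) = toE (f (θs i)) - toE y := rfl
            have e3 : toE (f (θs (i+1)) - f (θs i)) = toE (f (θs (i+1))) - toE (f (θs i)) := rfl
            rw [e1, e2, e3]; abel
          rw [hidE]; exact h
        -- residual recursion for steps below t
        have hres : ∀ i, i < t →
            ‖toE (f (θs (i+1)) - y)‖^2 ≤ ‖toE (f (θs i) - y)‖^2
              - (η/↑n) * ⟪toE (f (θs i) - y), toE ((Φ * Φ.transpose).mulVec (f (θs i) - y))⟫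
              + 3 * ((η/↑n) * ε) * ‖toE (f (θs i) - y)‖^2 := by
          intro i hi
          exact res_step_abstract Φ (le_of_lt hs) hε' hsK hsε _ _
            (hstepkey i (hball i (by omega)) (hball (i+1) (by omega)))
        -- telescoped energy
        have htel : ∀ m, m ≤ t →
            ‖toE (f (θs m) - y)‖^2
              + (η/↑n) * ∑ i ∈ Finset.range m,
                  ⟪toE (f (θs i) - y), toE ((Φ * Φ.transpose).mulVec (f (θs i) - y))⟫
            ≤ ‖toE y‖^2
              + 3 * ((η/↑n) * ε) * ∑ i ∈ Finset.range m, ‖toE (f (θs i) - y)‖^2 := by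
          intro m
          induction m with
          | zero =>
              intro _
              simp only [Finset.range_zero, Finset.sum_empty, mul_zero, add_zero]
              rw [hθ00, hf0, zero_sub]
              have h : toE (-y) = -toE y := rfl
              rw [h, norm_neg]
          | succ m ihm =>
              intro hm1
              have h1 := ihm (by omega)
              have h2 := hres m (by omega)
              rw [Finset.sum_range_succ, Finset.sum_range_succ, mul_add, mul_add]
              linarith
        have hsεt : (η/↑n) * ε * (t:ℝ) ≤ 1/100 := by
          have hηt : η * (t:ℝ) ≤ 1/100 * R^2 := by nlinarith [hη.le, hη1]
          rw [div_mul_eq_mul_div, div_mul_eq_mul_div, div_le_iff₀ hn']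
          calc η * ε * (t:ℝ) = (η * (t:ℝ)) * ε := by ring
            _ ≤ (1/100 * R^2) * ε := mul_le_mul_of_nonneg_right hηt hε'
            _ = 1/100 * (R^2 * ε) := by ring
            _ ≤ 1/100 * n := by linarith
        have hsum4 : ∑ i ∈ Finset.range t, ‖toE (f (θs i) - y)‖^2 ≤ 4 * n * t := by
          calc ∑ i ∈ Finset.range t, ‖toE (f (θs i) - y)‖^2
              ≤ ∑ _i ∈ Finset.range t, 4 * (n:ℝ) :=
                Finset.sum_le_sum fun i hi => hrb4 i (le_of_lt (Finset.mem_range.mp hi))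
            _ = 4 * n * t := by rw [Finset.sum_const, Finset.card_range]; push_cast; ring
        have hsum4' : ∑ i ∈ Finset.range (t+1), ‖toE (f (θs i) - y)‖^2 ≤ 4 * n * ((t:ℝ)+1) := by
          calc ∑ i ∈ Finset.range (t+1), ‖toE (f (θs i) - y)‖^2
              ≤ ∑ _i ∈ Finset.range (t+1), 4 * (n:ℝ) :=
                Finset.sum_le_sum fun i hi => hrb4 i (Nat.lt_succ_iff.mp (Finset.mem_range.mp hi))
            _ = 4 * n * ((t:ℝ)+1) := by
                rw [Finset.sum_const, Finset.card_range]; push_cast; ring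
        have hsumE : (η/↑n) * ∑ i ∈ Finset.range (t+1),
            ⟪toE (f (θs i) - y), toE ((Φ * Φ.transpose).mulVec (f (θs i) - y))⟫ ≤ 6 * n := by
          rw [Finset.sum_range_succ, mul_add]
          have h1 := htel t le_rfl
          have hterm_t : (η/↑n) *
              ⟪toE (f (θs t) - y), toE ((Φ * Φ.transpose).mulVec (f (θs t) - y))⟫ ≤ 4 * n := by
            have hKb := inner_mulVec_le (Φ * Φ.transpose) (f (θs t) - y)
            have hr4 := hrb4 t le_rfl
            calc (η/↑n) * ⟪toE (f (θs t) - y), toE ((Φ * Φ.transpose).mulVec (f (θs t) - y))⟫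
                ≤ (η/↑n) * (spNorm (Φ * Φ.transpose) * ‖toE (f (θs t) - y)‖^2) :=
                  mul_le_mul_of_nonneg_left hKb (le_of_lt hs)
              _ = ((η/↑n) * spNorm (Φ * Φ.transpose)) * ‖toE (f (θs t) - y)‖^2 := by ring
              _ ≤ 1 * (4 * n) :=
                  mul_le_mul hsK hr4 (sq_nonneg _) one_pos.le
              _ = 4 * n := one_mul _
          have h3 : 3 * ((η/↑n) * ε) * (∑ i ∈ Finset.range t, ‖toE (f (θs i) - y)‖^2)
              ≤ 3 * ((η/↑n) * ε) * (4 * n * t) :=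
            mul_le_mul_of_nonneg_left hsum4 (by positivity)
          have h4 : 3 * ((η/↑n) * ε) * (4 * (n:ℝ) * t) ≤ 12 * n * (1/100) := by
            calc 3 * ((η/↑n) * ε) * (4 * (n:ℝ) * t) = 12 * (n:ℝ) * ((η/↑n) * ε * t) := by ring
              _ ≤ 12 * n * (1/100) :=
                  mul_le_mul_of_nonneg_left hsεt (by positivity)
          nlinarith [sq_nonneg ‖toE (f (θs t) - y)‖, hyn]
        -- θ(t+1) in ball
        have hθnew : vnorm (θs (t+1) - θ0) ≤ R := by
          have hsum : θs (t+1) - θ0 = ∑ i ∈ Finset.range (t+1), (θs (i+1) - θs i) := by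
            rw [Finset.sum_range_sub (f := θs), hθ00]
          have h1 : ‖toE (θs (t+1) - θ0)‖ ≤ ∑ i ∈ Finset.range (t+1),
              (η/↑n) * ‖toE ((J (θs i)).transpose.mulVec (f (θs i) - y))‖ := by
            rw [hsum, ← toECLM_apply, map_sum]
            refine le_trans (norm_sum_le _ _) (Finset.sum_le_sum ?_)
            intro i _
            have hstepi : θs (i+1) - θs i
                = -((η/↑n) • (J (θs i)).transpose.mulVec (f (θs i) - y)) := by
              rw [hθstep i]; abel
            rw [toECLM_apply, hstepi]
            have h2 : toE (-((η/↑n) • (J (θs i)).transpose.mulVec (f (θs i) - y)))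
                = -((η/↑n) • toE ((J (θs i)).transpose.mulVec (f (θs i) - y))) := rfl
            rw [h2, norm_neg, norm_smul, Real.norm_eq_abs, abs_of_pos hs]
          have hsum2 : ∑ i ∈ Finset.range (t+1),
              ((η/↑n) * ‖toE ((J (θs i)).transpose.mulVec (f (θs i) - y))‖)^2
              ≤ (η/↑n) * (6*n) + (η/↑n)^2 * ε * (4 * n * ((t:ℝ)+1)) := by
            have hstep2 : ∀ i ∈ Finset.range (t+1),
                ((η/↑n) * ‖toE ((J (θs i)).transpose.mulVec (f (θs i) - y))‖)^2
                ≤ (η/↑n)^2 * ⟪toE (f (θs i) - y),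
                    toE ((Φ * Φ.transpose).mulVec (f (θs i) - y))⟫
                  + (η/↑n)^2 * ε * ‖toE (f (θs i) - y)‖^2 := by
              intro i hi
              have hib := Nat.lt_succ_iff.mp (Finset.mem_range.mp hi)
              have hJri := Jr_bound (J (θs i)) (Φ * Φ.transpose) (f (θs i) - y)
                (hJJ (θs i) (θs i) (hball i hib) (hball i hib))
              calc ((η/↑n) * ‖toE ((J (θs i)).transpose.mulVec (f (θs i) - y))‖)^2
                  = (η/↑n)^2 * ‖toE ((J (θs i)).transpose.mulVec (f (θs i) - y))‖^2 := by ring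
                _ ≤ (η/↑n)^2 * (⟪toE (f (θs i) - y),
                      toE ((Φ * Φ.transpose).mulVec (f (θs i) - y))⟫
                    + ε * ‖toE (f (θs i) - y)‖^2) :=
                    mul_le_mul_of_nonneg_left hJri (sq_nonneg _)
                _ = _ := by ring
            calc ∑ i ∈ Finset.range (t+1),
                ((η/↑n) * ‖toE ((J (θs i)).transpose.mulVec (f (θs i) - y))‖)^2
                ≤ ∑ i ∈ Finset.range (t+1), ((η/↑n)^2 * ⟪toE (f (θs i) - y),
                      toE ((Φ * Φ.transpose).mulVec (f (θs i) - y))⟫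
                    + (η/↑n)^2 * ε * ‖toE (f (θs i) - y)‖^2) :=
                  Finset.sum_le_sum hstep2
              _ = (η/↑n)^2 * (∑ i ∈ Finset.range (t+1), ⟪toE (f (θs i) - y),
                      toE ((Φ * Φ.transpose).mulVec (f (θs i) - y))⟫)
                  + (η/↑n)^2 * ε * (∑ i ∈ Finset.range (t+1), ‖toE (f (θs i) - y)‖^2) := by
                  rw [Finset.sum_add_distrib, ← Finset.mul_sum, ← Finset.mul_sum]
              _ ≤ (η/↑n) * (6*n) + (η/↑n)^2 * ε * (4 * n * ((t:ℝ)+1)) := by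
                  have hA : (η/↑n)^2 * (∑ i ∈ Finset.range (t+1), ⟪toE (f (θs i) - y),
                      toE ((Φ * Φ.transpose).mulVec (f (θs i) - y))⟫) ≤ (η/↑n) * (6*n) := by
                    have := mul_le_mul_of_nonneg_left hsumE (le_of_lt hs)
                    calc (η/↑n)^2 * (∑ i ∈ Finset.range (t+1), ⟪toE (f (θs i) - y),
                        toE ((Φ * Φ.transpose).mulVec (f (θs i) - y))⟫)
                        = (η/↑n) * ((η/↑n) * ∑ i ∈ Finset.range (t+1), ⟪toE (f (θs i) - y),
                          toE ((Φ * Φ.transpose).mulVec (f (θs i) - y))⟫) := by ring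
                      _ ≤ (η/↑n) * (6*n) := this
                  have hB : (η/↑n)^2 * ε * (∑ i ∈ Finset.range (t+1), ‖toE (f (θs i) - y)‖^2)
                      ≤ (η/↑n)^2 * ε * (4 * n * ((t:ℝ)+1)) :=
                    mul_le_mul_of_nonneg_left hsum4' (by positivity)
                  linarith
          -- put together
          have hcs := sq_sum_le (m := t+1)
            (fun i => (η/↑n) * ‖toE ((J (θs i)).transpose.mulVec (f (θs i) - y))‖)
          have hb2 := pow_le_pow_left₀ (norm_nonneg _) h1 2
          have hfinal : ‖toE (θs (t+1) - θ0)‖^2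
              ≤ ((t:ℝ)+1) * ((η/↑n) * (6*n) + (η/↑n)^2 * ε * (4 * n * ((t:ℝ)+1))) := by
            calc ‖toE (θs (t+1) - θ0)‖^2
                ≤ (∑ i ∈ Finset.range (t+1),
                    (η/↑n) * ‖toE ((J (θs i)).transpose.mulVec (f (θs i) - y))‖)^2 := hb2
              _ ≤ ((t+1 : ℕ):ℝ) * ∑ i ∈ Finset.range (t+1),
                  ((η/↑n) * ‖toE ((J (θs i)).transpose.mulVec (f (θs i) - y))‖)^2 := sq_sum_le _
              _ ≤ ((t:ℝ)+1) * ((η/↑n) * (6*n) + (η/↑n)^2 * ε * (4 * n * ((t:ℝ)+1))) := by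
                  push_cast
                  exact mul_le_mul_of_nonneg_left hsum2 (by positivity)
          -- arithmetic: RHS ≤ R²
          have e1 : ((t:ℝ)+1) * ((η/↑n) * (6*n)) = 6 * (η * ((t:ℝ)+1)) := by
            field_simp
          have e2 : ((t:ℝ)+1) * ((η/↑n)^2 * ε * (4 * n * ((t:ℝ)+1)))
              = 4 * (η * ((t:ℝ)+1)) * (ε * (η * ((t:ℝ)+1))) / n := by
            field_simp
          have hεP : ε * (η * ((t:ℝ)+1)) ≤ 1/100 * n := by nlinarith [hη1, hRε']
          have hP0 : 0 ≤ η * ((t:ℝ)+1) := by positivity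
          have e3 : 4 * (η * ((t:ℝ)+1)) * (ε * (η * ((t:ℝ)+1))) / n
              ≤ 4 * (1/100 * R^2) * (1/100 * n) / n := by
            gcongr
          have e4 : 4 * (1/100 * R^2) * (1/100 * (n:ℝ)) / n = 4/10000 * R^2 := by
            field_simp; ring
          rw [vnorm_eq]
          apply sq_le_imp (le_of_lt hR) _ (norm_nonneg _)
          calc ‖toE (θs (t+1) - θ0)‖^2
              ≤ ((t:ℝ)+1) * ((η/↑n) * (6*n)) + ((t:ℝ)+1) * ((η/↑n)^2 * ε * (4 * n * ((t:ℝ)+1))) := by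
                rw [← mul_add]; exact hfinal
            _ ≤ 6 * (1/100 * R^2) + 4/10000 * R^2 := by
                rw [e1, e2]
                have := le_trans e3 (le_of_eq e4)
                nlinarith [hη1]
            _ ≤ R^2 := by nlinarith [sq_nonneg R]
        -- δ(t+1)
        have hδnew : ‖toE (f (θs (t+1)) - Φ.mulVec (ωs (t+1)))‖
            ≤ 2 * η * ε * ((t:ℝ)+1) / Real.sqrt n := by
          have hkey_t := hstepkey t (hball t le_rfl) hθnew
          have hKw : (Φ * Φ.transpose).mulVec (f (θs t) - Φ.mulVec (ωs t))
              = (Φ * Φ.transpose).mulVec (f (θs t) - y)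
                - (Φ * Φ.transpose).mulVec (Φ.mulVec (ωs t) - y) := by
            have h := Matrix.mulVec_sub (Φ * Φ.transpose) (f (θs t) - y) (Φ.mulVec (ωs t) - y)
            rw [sub_sub_sub_cancel_right] at h
            exact h
          have hid : toE (f (θs (t+1)) - Φ.mulVec (ωs (t+1)))
              = (toE (f (θs t) - Φ.mulVec (ωs t))
                  - (η/↑n) • toE ((Φ * Φ.transpose).mulVec (f (θs t) - Φ.mulVec (ωs t))))
                + (toE (f (θs (t+1)) - y) - (toE (f (θs t) - y)
                  - (η/↑n) • toE ((Φ * Φ.transpose).mulVec (f (θs t) - y)))) := by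
            have e0 : toE (f (θs (t+1)) - Φ.mulVec (ωs (t+1)))
                = toE (f (θs (t+1)) - y) - toE (Φ.mulVec (ωs (t+1)) - y) := by
              rw [show f (θs (t+1)) - Φ.mulVec (ωs (t+1))
                  = (f (θs (t+1)) - y) - (Φ.mulVec (ωs (t+1)) - y) by abel]
              rfl
            have e1 : toE (Φ.mulVec (ωs (t+1)) - y)
                = toE (Φ.mulVec (ωs t) - y)
                  - (η/↑n) • toE ((Φ * Φ.transpose).mulVec (Φ.mulVec (ωs t) - y)) := by
              rw [hrlstep t]; rfl
            have e2 : toE (f (θs t) - Φ.mulVec (ωs t))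
                = toE (f (θs t) - y) - toE (Φ.mulVec (ωs t) - y) := by
              rw [show f (θs t) - Φ.mulVec (ωs t)
                  = (f (θs t) - y) - (Φ.mulVec (ωs t) - y) by abel]
              rfl
            have e3 : toE ((Φ * Φ.transpose).mulVec (f (θs t) - Φ.mulVec (ωs t)))
                = toE ((Φ * Φ.transpose).mulVec (f (θs t) - y))
                  - toE ((Φ * Φ.transpose).mulVec (Φ.mulVec (ωs t) - y)) := by
              rw [hKw]; rfl
            rw [e0, e1, e2, e3, smul_sub]
            abel
          have hctr := contract_norm Φ (f (θs t) - Φ.mulVec (ωs t)) (le_of_lt hs) hsK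
          have h1 := hδ t le_rfl
          have h2 := hrb t le_rfl
          have e5 : (η/↑n) * ε * (2 * Real.sqrt n) = 2 * η * ε / Real.sqrt n := by
            rw [eq_div_iff hsqn.ne', show (η/↑n) * ε * (2 * Real.sqrt n) * Real.sqrt n
                = (η/↑n) * ε * 2 * (Real.sqrt n * Real.sqrt n) by ring, hnsq]
            rw [div_mul_eq_mul_div, div_mul_eq_mul_div, div_mul_cancel₀ _ hn'.ne']; ring
          calc ‖toE (f (θs (t+1)) - Φ.mulVec (ωs (t+1)))‖
              ≤ ‖toE (f (θs t) - Φ.mulVec (ωs t))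
                  - (η/↑n) • toE ((Φ * Φ.transpose).mulVec (f (θs t) - Φ.mulVec (ωs t)))‖
                + ‖toE (f (θs (t+1)) - y) - (toE (f (θs t) - y)
                  - (η/↑n) • toE ((Φ * Φ.transpose).mulVec (f (θs t) - y)))‖ := by
                rw [hid]; exact norm_add_le _ _
            _ ≤ ‖toE (f (θs t) - Φ.mulVec (ωs t))‖ + (η/↑n) * ε * ‖toE (f (θs t) - y)‖ :=
                add_le_add hctr hkey_t
            _ ≤ 2 * η * ε * (t:ℝ) / Real.sqrt n + (η/↑n) * ε * (2 * Real.sqrt n) :=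
                add_le_add h1 (mul_le_mul_of_nonneg_left h2 (by positivity))
            _ = 2 * η * ε * ((t:ℝ)+1) / Real.sqrt n := by rw [e5]; ring
        constructor
        · intro i hi
          rcases Nat.lt_succ_iff_lt_or_eq.mp (Nat.lt_succ_of_le hi) with h | h
          · exact hball i (by omega)
          · rw [h]; exact hθnew
        · intro i hi
          rcases Nat.lt_succ_iff_lt_or_eq.mp (Nat.lt_succ_of_le hi) with h | h
          · exact hδ i (by omega)
          · rw [h]; push_cast; exact hδnew
  -- CONCLUSION
  intro t ht
  obtain ⟨hballt, hδt⟩ := key t ht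
  refine ⟨?_, hballt t le_rfl, hωdisp t ht⟩
  rw [vnorm_eq]
  calc ‖toE (f (θs t) - Φ.mulVec (ωs t))‖ ≤ 2 * η * ε * (t:ℝ) / Real.sqrt n := hδt t le_rfl
    _ = 2 * η * (t:ℝ) * ε / Real.sqrt n := by ring


end EarlyPhase

end
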